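/- Assume d is not a square in F. Let χ : F^× → ℂ^× be a group homomorphism trivial on o^×, and let Ω : T(F) → ℂ^× be a group homomorphism with conductor exponent C := c(Ω) and with Ω(z·1) = χ(z)² for all z ∈ F^×. Let B : GL₂(F) → ℂ satisfy: (E) B(t·g·k) = Ω(t)·B(g) for all t ∈ T(F), g ∈ GL₂(F), k ∈ I; (N) for every set R ⊆ o of representatives of o/p and every g ∈ GL₂(F), ∑_{u ∈ R} B(g·[[1, 0], [u, 1]]) = −B(g·w); (A) B(g·[[0, 1], [ϖ, 0]]) = −χ(ϖ)·B(g) for all g ∈ GL₂(F). Then for every integer r ≥ max{C − 1, 0}: B(diag(ϖ^{r+1}, 1)·w) = (χ(ϖ)/q)·B(diag(ϖ^r, 1)·w). -/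

import Mathlib

open Matrix

noncomputable section

abbrev Zm0 : Type := WithZero (Multiplicative ℤ)

/-- `ev n` is the value (in `ℤₘ₀ = WithZero (Multiplicative ℤ)`) of an element of additive
valuation `n`; thus `x ∈ 𝔭^n` iff `v x ≤ ev n`, `x ∈ 𝔬` iff `v x ≤ ev 0`, and `x ∈ 𝔬^×` iff
`v x = ev 0`. -/
def ev (n : ℤ) : Zm0 := ((Multiplicative.ofAdd (-n) : Multiplicative ℤ) : Zm0)

variable {F : Type*} [Field F]

/-- the matrix t(x,y) = [[x, cy],[−ay, x−by]] -/
def tmat (a b c x y : F) : Matrix (Fin 2) (Fin 2) F :=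
  !![x, c * y; -(a * y), x - b * y]

/-- the torus T(F) ⊆ GL₂(F), as a set of matrices -/
def TSet (a b c : F) : Set (Matrix (Fin 2) (Fin 2) F) :=
  {m | ∃ x y : F, x ^ 2 - b * x * y + a * c * y ^ 2 ≠ 0 ∧ m = tmat a b c x y}

def wmat (F : Type*) [Field F] : Matrix (Fin 2) (Fin 2) F := !![0, 1; -1, 0]

/-- GL₂(𝔬) : integral entries and unit determinant -/
def GL2O (v : Valuation F Zm0) : Set (Matrix (Fin 2) (Fin 2) F) :=
  {g | (∀ i j, v (g i j) ≤ ev 0) ∧ v g.det = ev 0}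

/-- the Iwahori subgroup I = { g ∈ GL₂(𝔬) : g₂₁ ∈ 𝔭 } -/
def Iwahori (v : Valuation F Zm0) : Set (Matrix (Fin 2) (Fin 2) F) :=
  {g | g ∈ GL2O v ∧ v (g 1 0) ≤ ev 1}

/-- membership in U_m ⊆ T(F): U_0 = T(F) ∩ GL₂(𝔬), and for m ≥ 1,
U_m = { t ∈ T(F) : t − 1 ∈ ϖ^m·M₂(𝔬) } -/
def Umem (v : Valuation F Zm0) (a b c : F) (m : ℕ) (t : Matrix (Fin 2) (Fin 2) F) : Prop :=
  t ∈ TSet a b c ∧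
    (if m = 0 then (∀ i j, v (t i j) ≤ ev 0) ∧ v t.det = ev 0
     else ∀ i j, v ((t - 1) i j) ≤ ev m)

/- ### auxiliary lemmas -/

lemma ev_le_ev {m n : ℤ} : ev m ≤ ev n ↔ n ≤ m := by
  unfold ev; rw [WithZero.coe_le_coe, Multiplicative.ofAdd_le, neg_le_neg_iff]

lemma ev_lt_ev {m n : ℤ} : ev m < ev n ↔ n < m := by
  rw [lt_iff_le_not_ge, lt_iff_le_not_ge, ev_le_ev, ev_le_ev]

lemma ev_zero : ev 0 = 1 := by unfold ev; simp

lemma ev_ne_zero (n : ℤ) : ev n ≠ 0 := WithZero.coe_ne_zero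

lemma ev_mul_ev (m n : ℤ) : ev m * ev n = ev (m + n) := by
  unfold ev; rw [← WithZero.coe_mul, ← ofAdd_add, neg_add]

lemma ev_one_pow (n : ℕ) : (ev 1) ^ n = ev n := by
  induction n with
  | zero => simpa using ev_zero.symm
  | succ k ih => rw [pow_succ, ih, ev_mul_ev]; norm_num

lemma val_unit {x : Zm0} (h1 : x ≤ ev 0) (h2 : ¬ x ≤ ev 1) : x = ev 0 := by
  rcases eq_or_ne x 0 with h | h
  · exact absurd (h ▸ zero_le') h2
  · obtain ⟨m, rfl⟩ := WithZero.ne_zero_iff_exists.mp h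
    unfold ev at *
    rw [WithZero.coe_le_coe] at h1 h2
    rw [WithZero.coe_inj]
    have h1' : Multiplicative.toAdd m ≤ 0 := by rw [← Multiplicative.ofAdd_le]; simpa using h1
    have h2' : ¬ Multiplicative.toAdd m ≤ -1 := by rw [← Multiplicative.ofAdd_le]; simpa using h2
    have h3 : Multiplicative.toAdd m = 0 := by omega
    rw [neg_zero, ← h3, ofAdd_toAdd]

lemma val_mul_le {v : Valuation F Zm0} {x y : F} {s t : Zm0}
    (hx : v x ≤ s) (hy : v y ≤ t) : v (x * y) ≤ s * t := by
  rw [v.map_mul]; exact mul_le_mul' hx hy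

lemma keyid (a b c u P : F) (hc : c ≠ 0) (hD0 : c*u^2 - b*u*P + a*P^2 ≠ 0) :
    !![P,0;0,1] * !![1,0;u,1] =
      tmat a b c (c*u) P * (!![P,0;0,1] * wmat F) *
        !![-(c*u^2 + a*P^2)/(c*(c*u^2 - b*u*P + a*P^2)), -(c*u)/(c*(c*u^2 - b*u*P + a*P^2));
           -(b*P)/(c*(c*u^2 - b*u*P + a*P^2)), -c/(c*(c*u^2 - b*u*P + a*P^2))] := by
  set D := c*u^2 - b*u*P + a*P^2 with hD
  ext i j
  fin_cases i <;> fin_cases j <;>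
    (simp [tmat, wmat, Matrix.mul_apply, Fin.sum_univ_two]; field_simp; rw [hD]; ring)

lemma keyid2 (ϖ : F) (r : ℕ) :
    !![ϖ^r,0;0,1] * wmat F * !![0,1;ϖ,0] = !![ϖ^(r+1),0;0,1] * !![1,0;0,(-1:F)] := by
  ext i j
  fin_cases i <;> fin_cases j <;>
    (simp [wmat, Matrix.mul_apply, Fin.sum_univ_two]; try ring)

lemma keyid3 (a b c z ε : F) :
    (z • (1 : Matrix (Fin 2) (Fin 2) F)) * tmat a b c 1 ε = tmat a b c z (z * ε) := by
  ext i j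
  fin_cases i <;> fin_cases j <;>
    (simp [tmat, Matrix.mul_apply, Fin.sum_univ_two, Matrix.one_apply]; try ring)

lemma tmat_one (a b c : F) : tmat a b c 1 0 = 1 := by
  ext i j
  fin_cases i <;> fin_cases j <;> simp [tmat, Matrix.one_apply]

lemma tmat_smul_one (a b c z : F) : tmat a b c z 0 = z • (1 : Matrix (Fin 2) (Fin 2) F) := by
  ext i j
  fin_cases i <;> fin_cases j <;> simp [tmat, Matrix.one_apply]

/-- for r ≥ max{c(Ω)−1, 0}, B(diag(ϖ^{r+1},1)·w) = (χ(ϖ)/q)·B(diag(ϖ^r,1)·w). -/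
theorem stmt11
    (v : Valuation F Zm0) (ϖ : F) (hϖ : v ϖ = ev 1)
    (a b c : F)
    (hao : v a ≤ ev 0) (hbo : v b ≤ ev 0) (hc : v c = ev 0)
    (hd0 : b ^ 2 - 4 * (a * c) ≠ 0)
    (hnonsq : ∀ s : F, s ^ 2 ≠ b ^ 2 - 4 * (a * c))
    -- q is the cardinality of the residue field 𝔬/𝔭 :
    (q : ℕ) (hq : ∃ R : Finset F, R.card = q ∧ (∀ r ∈ R, v r ≤ ev 0) ∧
      ∀ x : F, v x ≤ ev 0 → ∃! r, r ∈ R ∧ v (x - r) ≤ ev 1)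
    -- χ : F^× → ℂ^× a homomorphism trivial on 𝔬^× :
    (χ : F → ℂ)
    (hχmul : ∀ x y : F, x ≠ 0 → y ≠ 0 → χ (x * y) = χ x * χ y)
    (hχne : ∀ x : F, x ≠ 0 → χ x ≠ 0)
    (hχtriv : ∀ u : F, v u = ev 0 → χ u = 1)
    -- Ω : T(F) → ℂ^× a homomorphism with conductor exponent C and Ω(z·1) = χ(z)² :
    (Ω : Matrix (Fin 2) (Fin 2) F → ℂ)
    (hΩmul : ∀ s t, s ∈ TSet a b c → t ∈ TSet a b c → Ω (s * t) = Ω s * Ω t)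
    (hΩne : ∀ t ∈ TSet a b c, Ω t ≠ 0)
    (C : ℕ)
    (hcond : ∀ t, Umem v a b c C t → Ω t = 1)
    (hleast : ∀ m : ℕ, m < C → ∃ t, Umem v a b c m t ∧ Ω t ≠ 1)
    (hcent : ∀ z : F, z ≠ 0 → Ω (z • (1 : Matrix (Fin 2) (Fin 2) F)) = (χ z) ^ 2)
    (B : Matrix (Fin 2) (Fin 2) F → ℂ)
    -- (E) equivariance :
    (hE : ∀ t g k, t ∈ TSet a b c → k ∈ Iwahori v → B (t * g * k) = Ω t * B g)
    -- (N) summing over any set of representatives of 𝔬/𝔭 :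
    (hN : ∀ R : Finset F, (∀ r ∈ R, v r ≤ ev 0) →
      (∀ x : F, v x ≤ ev 0 → ∃! r, r ∈ R ∧ v (x - r) ≤ ev 1) →
      ∀ g, (∑ u ∈ R, B (g * !![1, 0; u, 1])) = - B (g * wmat F))
    -- (A) Atkin–Lehner eigenvector property :
    (hA : ∀ g, B (g * !![0, 1; ϖ, 0]) = -(χ ϖ) * B g) :
    ∀ r : ℕ, C - 1 ≤ r →
      B (!![ϖ ^ (r + 1), 0; 0, 1] * wmat F) = (χ ϖ / (q : ℂ)) * B (!![ϖ ^ r, 0; 0, 1] * wmat F)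
    := by
  classical
  obtain ⟨R, hRcard, hRint, hRrep⟩ := hq
  have hev10 : ev 1 ≤ ev 0 := ev_le_ev.mpr (by norm_num)
  have hev1lt : ev 1 < ev 0 := ev_lt_ev.mpr (by norm_num)
  have hv1 : v (1:F) = ev 0 := by rw [v.map_one, ev_zero]
  have hv0 : ∀ n : ℤ, v (0:F) ≤ ev n := fun n => by rw [v.map_zero]; exact zero_le'
  have hc0 : c ≠ 0 := by
    intro h; rw [h, v.map_zero] at hc; exact (ev_ne_zero 0) hc.symm
  have hϖ0 : ϖ ≠ 0 := by
    intro h; rw [h, v.map_zero] at hϖ; exact (ev_ne_zero 1) hϖ.symm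
  -- the representative of 0
  obtain ⟨u₀, ⟨hu₀R, hu₀v'⟩, hu₀uniq⟩ := hRrep 0 (by rw [v.map_zero]; exact zero_le')
  have hu₀v : v u₀ ≤ ev 1 := by rwa [zero_sub, v.map_neg] at hu₀v'
  have hu₀int : v u₀ ≤ ev 0 := hRint u₀ hu₀R
  have hq1 : 1 ≤ q := hRcard ▸ Finset.card_pos.mpr ⟨u₀, hu₀R⟩
  have hqC : (q : ℂ) ≠ 0 := Nat.cast_ne_zero.mpr (by omega)
  -- Ω(1) = 1
  have h1T : (1 : Matrix (Fin 2) (Fin 2) F) ∈ TSet a b c :=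
    ⟨1, 0, by norm_num, (tmat_one a b c).symm⟩
  have hΩ1 : Ω 1 = 1 := by
    apply hcond
    refine ⟨h1T, ?_⟩
    split_ifs with hC
    · constructor
      · intro i j
        rw [Matrix.one_fin_two]
        fin_cases i <;> fin_cases j <;>
          simp only [Fin.isValue, Fin.zero_eta, Fin.mk_one, Matrix.of_apply, Matrix.cons_val', Matrix.cons_val_zero, Matrix.cons_val_one,
            Matrix.head_cons, Matrix.head_fin_const, Matrix.empty_val',
            Matrix.cons_val_fin_one] <;>
          first
            | exact le_of_eq hv1
            | exact hv0 0
      · rw [Matrix.det_one]; rw [ev_zero]; exact v.map_one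
    · intro i j
      rw [sub_self, Matrix.zero_apply]
      exact hv0 _
  intro r hr
  have hrC : C ≤ r + 1 := by omega
  have hvP : v (ϖ ^ (r+1)) = ev (r+1 : ℕ) := by rw [map_pow, hϖ, ev_one_pow]
  have hP1 : v (ϖ ^ (r+1)) ≤ ev 1 := by
    rw [hvP, ev_le_ev]; exact_mod_cast Nat.succ_le_succ (Nat.zero_le r)
  have hPle0 : v (ϖ ^ (r+1)) ≤ ev 0 := le_trans hP1 hev10
  -- B(diag(ϖ^{r+1},1)) = -χ(ϖ) B(diag(ϖ^r,1) w)
  have hIdd : !![(1:F),0;0,-1] ∈ Iwahori v := by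
    refine ⟨⟨?_, ?_⟩, ?_⟩
    · intro i j
      fin_cases i <;> fin_cases j <;>
        simp only [Fin.isValue, Fin.zero_eta, Fin.mk_one, Matrix.of_apply, Matrix.cons_val', Matrix.cons_val_zero, Matrix.cons_val_one,
          Matrix.head_cons, Matrix.head_fin_const, Matrix.empty_val',
          Matrix.cons_val_fin_one] <;>
        first
          | exact le_of_eq hv1
          | exact hv0 0
          | (rw [v.map_neg]; exact le_of_eq hv1)
    · rw [Matrix.det_fin_two_of, show (1:F)*(-1) - 0*0 = -1 by ring, v.map_neg]
      exact hv1
    · simp only [Fin.isValue, Fin.zero_eta, Fin.mk_one, Matrix.of_apply, Matrix.cons_val', Matrix.cons_val_zero, Matrix.cons_val_one,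
        Matrix.head_cons, Matrix.head_fin_const, Matrix.empty_val',
        Matrix.cons_val_fin_one]
      exact hv0 1
  have hBg : B !![ϖ^(r+1), 0; 0, 1] = -(χ ϖ) * B (!![ϖ^r, 0; 0, 1] * wmat F) := by
    have hA' := hA (!![ϖ^r, 0; 0, 1] * wmat F)
    rw [keyid2 ϖ r] at hA'
    have hE' := hE 1 !![ϖ^(r+1), 0; 0, 1] !![(1:F),0;0,-1] h1T hIdd
    rw [one_mul, hΩ1, one_mul] at hE'
    rw [← hE']; exact hA'
  -- the u₀ term
  have hIu₀ : !![(1:F),0;u₀,1] ∈ Iwahori v := by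
    refine ⟨⟨?_, ?_⟩, ?_⟩
    · intro i j
      fin_cases i <;> fin_cases j <;>
        simp only [Fin.isValue, Fin.zero_eta, Fin.mk_one, Matrix.of_apply, Matrix.cons_val', Matrix.cons_val_zero, Matrix.cons_val_one,
          Matrix.head_cons, Matrix.head_fin_const, Matrix.empty_val',
          Matrix.cons_val_fin_one] <;>
        first
          | exact le_of_eq hv1
          | exact hv0 0
          | exact hu₀int
    · rw [Matrix.det_fin_two_of, show (1:F)*1 - 0*u₀ = 1 by ring]
      rw [ev_zero]; exact v.map_one
    · simp only [Fin.isValue, Fin.zero_eta, Fin.mk_one, Matrix.of_apply, Matrix.cons_val', Matrix.cons_val_zero, Matrix.cons_val_one,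
        Matrix.head_cons, Matrix.head_fin_const, Matrix.empty_val',
        Matrix.cons_val_fin_one]
      exact hu₀v
  have hu₀term : B (!![ϖ^(r+1), 0; 0, 1] * !![1,0;u₀,1]) = B !![ϖ^(r+1), 0; 0, 1] := by
    have hE' := hE 1 !![ϖ^(r+1), 0; 0, 1] !![(1:F),0;u₀,1] h1T hIu₀
    rw [one_mul, hΩ1, one_mul] at hE'
    exact hE'
  -- the unit terms
  have hunit : ∀ u ∈ R.erase u₀,
      B (!![ϖ^(r+1), 0; 0, 1] * !![1,0;u,1]) = B (!![ϖ^(r+1), 0; 0, 1] * wmat F) := by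
    intro u hu
    have huR : u ∈ R := Finset.mem_of_mem_erase hu
    have hune : u ≠ u₀ := Finset.ne_of_mem_erase hu
    have hunotp : ¬ v u ≤ ev 1 := fun hle =>
      hune (hu₀uniq u ⟨huR, by rwa [zero_sub, v.map_neg]⟩)
    have hvu : v u = ev 0 := val_unit (hRint u huR) hunotp
    have hu0 : u ≠ 0 := by
      intro h; rw [h, v.map_zero] at hvu; exact (ev_ne_zero 0) hvu.symm
    have hcu0 : c * u ≠ 0 := mul_ne_zero hc0 hu0
    have hvcu : v (c*u) = ev 0 := by
      rw [v.map_mul, hc, hvu, ev_mul_ev]; norm_num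
    -- abbreviate P
    obtain ⟨P, hP⟩ : ∃ x : F, ϖ^(r+1) = x := ⟨_, rfl⟩
    rw [hP]
    have hvP' : v P = ev (r+1 : ℕ) := hP ▸ hvP
    have hP1' : v P ≤ ev 1 := hP ▸ hP1
    have hPle0' : v P ≤ ev 0 := hP ▸ hPle0
    have hPC : v P ≤ ev (C : ℕ) := by
      rw [hvP', ev_le_ev]; exact_mod_cast hrC
    have hmul00 : (ev 0 : Zm0) * ev 0 = ev 0 := by rw [ev_mul_ev]; norm_num
    have hmul001 : ((ev 0 : Zm0) * ev 0) * ev 1 = ev 1 := by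
      rw [ev_mul_ev, ev_mul_ev]; norm_num
    have hmul01 : (ev 0 : Zm0) * ev 1 = ev 1 := by rw [ev_mul_ev]; norm_num
    -- valuation of D := c u² − b u P + a P²
    have hvcu2 : v (c*u^2) = ev 0 := by
      rw [show c*u^2 = (c*u)*u by ring, v.map_mul, hvcu, hvu, ev_mul_ev]; norm_num
    have haP2 : v (a*P^2) ≤ ev 1 := by
      rw [show a*P^2 = (a*P)*P by ring]
      exact hmul001 ▸ val_mul_le (val_mul_le hao hPle0') hP1'
    have hbuP : v (b*u*P) ≤ ev 1 :=
      hmul001 ▸ val_mul_le (val_mul_le hbo (le_of_eq hvu)) hP1'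
    have hbP : v (b*P) ≤ ev 1 := hmul01 ▸ val_mul_le hbo hP1'
    have hrest : v (a*P^2 - b*u*P) ≤ ev 1 :=
      le_trans (v.map_sub _ _) (max_le haP2 hbuP)
    have hvD : v (c*u^2 - b*u*P + a*P^2) = ev 0 := by
      rw [show c*u^2 - b*u*P + a*P^2 = c*u^2 + (a*P^2 - b*u*P) by ring,
        v.map_add_eq_of_lt_left (by rw [hvcu2]; exact lt_of_le_of_lt hrest hev1lt)]
      exact hvcu2
    have hD0 : c*u^2 - b*u*P + a*P^2 ≠ 0 := by
      intro h; rw [h, v.map_zero] at hvD; exact (ev_ne_zero 0) hvD.symm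
    have hE0 : c*(c*u^2 - b*u*P + a*P^2) ≠ 0 := mul_ne_zero hc0 hD0
    have hvE : v (c*(c*u^2 - b*u*P + a*P^2)) = ev 0 := by
      rw [v.map_mul, hc, hvD, hmul00]
    -- t_u ∈ T
    have htu : tmat a b c (c*u) P ∈ TSet a b c := by
      refine ⟨c*u, P, ?_, rfl⟩
      rw [show (c*u)^2 - b*(c*u)*P + a*c*P^2 = c*(c*u^2 - b*u*P + a*P^2) by ring]
      exact hE0
    -- ε := P/(cu) and s := t(1,ε)
    obtain ⟨ε, hε⟩ : ∃ x : F, P/(c*u) = x := ⟨_, rfl⟩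
    have hvε : v ε = v P := by rw [← hε, v.map_div, hvcu, ev_zero, div_one]
    have hε1 : v ε ≤ ev 1 := hvε ▸ hP1'
    have hε0 : v ε ≤ ev 0 := hvε ▸ hPle0'
    have hεC : v ε ≤ ev (C : ℕ) := hvε ▸ hPC
    have hvcε : v (c*ε) ≤ ev (C:ℕ) := by
      have h := val_mul_le (le_of_eq hc) hεC
      rwa [ev_mul_ev, zero_add] at h
    have hvaε : v (a*ε) ≤ ev (C:ℕ) := by
      have h := val_mul_le hao hεC
      rwa [ev_mul_ev, zero_add] at h
    have hvbε : v (b*ε) ≤ ev (C:ℕ) := by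
      have h := val_mul_le hbo hεC
      rwa [ev_mul_ev, zero_add] at h
    have hvcε0 : v (c*ε) ≤ ev 0 := by
      have h := val_mul_le (le_of_eq hc) hε0; rwa [hmul00] at h
    have hvaε0 : v (a*ε) ≤ ev 0 := by
      have h := val_mul_le hao hε0; rwa [hmul00] at h
    have hvbε1 : v (b*ε) ≤ ev 1 := by
      have h := val_mul_le hbo hε1; rwa [hmul01] at h
    have hv1bε : v (1 - b*ε) = ev 0 := by
      rw [v.map_sub_eq_of_lt_left
        (by rw [v.map_one, ← ev_zero]; exact lt_of_le_of_lt hvbε1 hev1lt)]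
      exact hv1
    have hvdet1 : v (1 + (a*c*ε^2 - b*ε)) = ev 0 := by
      have h1 : v (a*c*ε^2 - b*ε) ≤ ev 1 := by
        refine le_trans (v.map_sub _ _) (max_le ?_ hvbε1)
        rw [show a*c*ε^2 = ((a*c)*ε)*ε by ring]
        refine hmul001 ▸ val_mul_le (val_mul_le ?_ hε0) hε1
        have h := val_mul_le hao (le_of_eq hc); rwa [hmul00] at h
      rw [v.map_add_eq_of_lt_left
        (by rw [v.map_one, ← ev_zero]; exact lt_of_le_of_lt h1 hev1lt)]
      exact hv1
    have hsdet0 : (1:F)^2 - b*1*ε + a*c*ε^2 ≠ 0 := by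
      rw [show (1:F)^2 - b*1*ε + a*c*ε^2 = 1 + (a*c*ε^2 - b*ε) by ring]
      intro h; rw [h, v.map_zero] at hvdet1; exact (ev_ne_zero 0) hvdet1.symm
    have hsT : tmat a b c 1 ε ∈ TSet a b c := ⟨1, ε, hsdet0, rfl⟩
    -- Ω(t(1,ε)) = 1 (conductor)
    have hsub1 : tmat a b c 1 ε - 1 = !![0, c*ε; -(a*ε), -(b*ε)] := by
      rw [show tmat a b c 1 ε = !![(1:F), c*ε; -(a*ε), 1 - b*ε] from rfl,
        Matrix.one_fin_two]
      ext i j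
      fin_cases i <;> fin_cases j <;>
        simp only [Fin.isValue, Fin.zero_eta, Fin.mk_one, Matrix.of_apply, Matrix.sub_apply, Matrix.cons_val', Matrix.cons_val_zero,
          Matrix.cons_val_one, Matrix.head_cons, Matrix.head_fin_const,
          Matrix.empty_val', Matrix.cons_val_fin_one] <;> ring
    have hsdet : (tmat a b c 1 ε).det = 1 + (a*c*ε^2 - b*ε) := by
      rw [show tmat a b c 1 ε = !![(1:F), c*ε; -(a*ε), 1 - b*ε] from rfl,
        Matrix.det_fin_two_of]
      ring
    have hΩs : Ω (tmat a b c 1 ε) = 1 := by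
      apply hcond
      refine ⟨hsT, ?_⟩
      split_ifs with hC
      · constructor
        · intro i j
          rw [show tmat a b c 1 ε = !![(1:F), c*ε; -(a*ε), 1 - b*ε] from rfl]
          fin_cases i <;> fin_cases j <;>
            simp only [Fin.isValue, Fin.zero_eta, Fin.mk_one, Matrix.of_apply, Matrix.cons_val', Matrix.cons_val_zero, Matrix.cons_val_one,
              Matrix.head_cons, Matrix.head_fin_const, Matrix.empty_val',
              Matrix.cons_val_fin_one] <;>
            first
              | exact le_of_eq hv1
              | exact hvcε0
              | (rw [v.map_neg]; exact hvaε0)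
              | exact le_of_eq hv1bε
        · rw [hsdet]; exact hvdet1
      · intro i j
        rw [hsub1]
        fin_cases i <;> fin_cases j <;>
          simp only [Fin.isValue, Fin.zero_eta, Fin.mk_one, Matrix.of_apply, Matrix.cons_val', Matrix.cons_val_zero, Matrix.cons_val_one,
            Matrix.head_cons, Matrix.head_fin_const, Matrix.empty_val',
            Matrix.cons_val_fin_one] <;>
          first
            | exact hv0 _
            | exact hvcε
            | (rw [v.map_neg]; exact hvaε)
            | (rw [v.map_neg]; exact hvbε)
    -- Ω(t_u) = 1
    have hcuε : c*u*ε = P := by rw [← hε]; field_simp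
    have hprod : tmat a b c (c*u) P
        = ((c*u) • (1:Matrix (Fin 2) (Fin 2) F)) * tmat a b c 1 ε := by
      rw [keyid3 a b c (c*u) ε, hcuε]
    have hsm1T : ((c*u) • (1:Matrix (Fin 2) (Fin 2) F)) ∈ TSet a b c := by
      refine ⟨c*u, 0, ?_, (tmat_smul_one a b c (c*u)).symm⟩
      rw [show (c*u)^2 - b*(c*u)*0 + a*c*0^2 = (c*u)^2 by ring]
      exact pow_ne_zero 2 hcu0
    have hΩtu : Ω (tmat a b c (c*u) P) = 1 := by
      rw [hprod, hΩmul _ _ hsm1T hsT, hcent (c*u) hcu0, hχtriv (c*u) hvcu, hΩs]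
      norm_num
    -- k ∈ Iwahori
    have hdiv : ∀ x : F, v (-x/(c*(c*u^2 - b*u*P + a*P^2))) = v x := by
      intro x; rw [v.map_div, v.map_neg, hvE, ev_zero, div_one]
    have hkI : !![-(c*u^2 + a*P^2)/(c*(c*u^2 - b*u*P + a*P^2)),
          -(c*u)/(c*(c*u^2 - b*u*P + a*P^2));
          -(b*P)/(c*(c*u^2 - b*u*P + a*P^2)),
          -c/(c*(c*u^2 - b*u*P + a*P^2))] ∈ Iwahori v := by
      refine ⟨⟨?_, ?_⟩, ?_⟩
      · intro i j
        fin_cases i <;> fin_cases j <;>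
          simp only [Fin.isValue, Fin.zero_eta, Fin.mk_one, Matrix.of_apply, Matrix.cons_val', Matrix.cons_val_zero, Matrix.cons_val_one,
            Matrix.head_cons, Matrix.head_fin_const, Matrix.empty_val',
            Matrix.cons_val_fin_one] <;>
          rw [hdiv] <;>
          first
            | exact v.map_add_le (le_of_eq hvcu2) (le_trans haP2 hev10)
            | exact le_of_eq hvcu
            | exact le_trans hbP hev10
            | exact le_of_eq hc
      · have hdk : (!![-(c*u^2 + a*P^2)/(c*(c*u^2 - b*u*P + a*P^2)),
            -(c*u)/(c*(c*u^2 - b*u*P + a*P^2));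
            -(b*P)/(c*(c*u^2 - b*u*P + a*P^2)),
            -c/(c*(c*u^2 - b*u*P + a*P^2))]).det
            = (c*(c*u^2 - b*u*P + a*P^2))⁻¹ := by
          rw [Matrix.det_fin_two_of, div_mul_div_comm, div_mul_div_comm, ← sub_div,
            div_eq_iff (mul_ne_zero hE0 hE0), inv_mul_cancel_left₀ hE0]
          ring
        rw [hdk, map_inv₀, hvE, ev_zero, inv_one]
      · simp only [Fin.isValue, Fin.zero_eta, Fin.mk_one, Matrix.of_apply, Matrix.cons_val', Matrix.cons_val_zero, Matrix.cons_val_one,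
          Matrix.head_cons, Matrix.head_fin_const, Matrix.empty_val',
          Matrix.cons_val_fin_one]
        rw [hdiv]
        exact hbP
    -- conclude
    rw [keyid a b c u P hc0 hD0, hE _ _ _ htu hkI, hΩtu, one_mul]
  -- assemble
  have hsum := hN R hRint hRrep !![ϖ^(r+1), 0; 0, 1]
  rw [← Finset.add_sum_erase R _ hu₀R, Finset.sum_congr rfl hunit, Finset.sum_const,
    Finset.card_erase_of_mem hu₀R, hRcard, hu₀term, hBg] at hsum
  rw [nsmul_eq_mul, Nat.cast_sub hq1, Nat.cast_one] at hsum
  rw [div_mul_eq_mul_div, eq_div_iff hqC]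
  linear_combination hsum
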